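/- For z, x, y ∈ ℂⁿ with z ≠ x and z ≠ y, one has for each coordinate i the inequality |(z_i − y_i)/|z−y|² − (z_i − x_i)/|z−x|²| ≤ (2|x−y|/(|z−x|·|z−y|))·(1 + |x−y|/|z−y|). -/

import Mathlib

open scoped ComplexInnerProductSpace

theorem stmt12 (n : ℕ) (z x y : EuclideanSpace ℂ (Fin n)) (hzx : z ≠ x) (hzy : z ≠ y) :
    ∀ i : Fin n,
      ‖(z i - y i) / ((‖z - y‖ ^ 2 : ℝ) : ℂ) - (z i - x i) / ((‖z - x‖ ^ 2 : ℝ) : ℂ)‖ ≤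
        2 * ‖x - y‖ / (‖z - x‖ * ‖z - y‖) * (1 + ‖x - y‖ / ‖z - y‖) := by
  intro i
  have ha : (0:ℝ) < ‖z - x‖ := by
    rw [norm_pos_iff]; exact sub_ne_zero.mpr hzx
  have hb : (0:ℝ) < ‖z - y‖ := by
    rw [norm_pos_iff]; exact sub_ne_zero.mpr hzy
  set a := ‖z - x‖
  set b := ‖z - y‖
  set c := ‖x - y‖
  set w : EuclideanSpace ℂ (Fin n) :=
    ((b ^ 2 : ℝ) : ℂ)⁻¹ • (z - y) - ((a ^ 2 : ℝ) : ℂ)⁻¹ • (z - x) with hw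
  have hwi : (z i - y i) / ((b ^ 2 : ℝ) : ℂ) - (z i - x i) / ((a ^ 2 : ℝ) : ℂ) = w i := by
    simp [hw, div_eq_mul_inv, mul_comm]
  -- inner product of (z-y) and (z-x)
  have hinner : 2 * RCLike.re ((inner ℂ (z - y) (z - x) : ℂ)) = b ^ 2 + a ^ 2 - c ^ 2 := by
    have h1 : ‖(z - y) - (z - x)‖ ^ 2 =
        ‖z - y‖ ^ 2 - 2 * RCLike.re ((inner ℂ (z - y) (z - x) : ℂ)) + ‖z - x‖ ^ 2 :=
      norm_sub_sq (𝕜 := ℂ) _ _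
    have h2 : (z - y) - (z - x) = x - y := by abel
    rw [h2] at h1
    linarith [h1]
  have hwnormsq : ‖w‖ ^ 2 = (c / (a * b)) ^ 2 := by
    have h1 : ‖w‖ ^ 2 = ‖((b ^ 2 : ℝ) : ℂ)⁻¹ • (z - y)‖ ^ 2
        - 2 * RCLike.re ((inner ℂ (((b ^ 2 : ℝ) : ℂ)⁻¹ • (z - y)) (((a ^ 2 : ℝ) : ℂ)⁻¹ • (z - x)) : ℂ))
        + ‖((a ^ 2 : ℝ) : ℂ)⁻¹ • (z - x)‖ ^ 2 := norm_sub_sq (𝕜 := ℂ) _ _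
    have hn1 : ‖((b ^ 2 : ℝ) : ℂ)⁻¹ • (z - y)‖ = (b ^ 2)⁻¹ * b := by
      rw [norm_smul]
      simp [abs_of_pos (pow_pos hb 2)]
      exact Or.inl rfl
    have hn2 : ‖((a ^ 2 : ℝ) : ℂ)⁻¹ • (z - x)‖ = (a ^ 2)⁻¹ * a := by
      rw [norm_smul]
      simp [abs_of_pos (pow_pos ha 2)]
      exact Or.inl rfl
    have hi : (inner ℂ (((b ^ 2 : ℝ) : ℂ)⁻¹ • (z - y)) (((a ^ 2 : ℝ) : ℂ)⁻¹ • (z - x)) : ℂ)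
        = ((b ^ 2 : ℝ) : ℂ)⁻¹ * (((a ^ 2 : ℝ) : ℂ)⁻¹ * (inner ℂ (z - y) (z - x) : ℂ)) := by
      rw [inner_smul_left, inner_smul_right, map_inv₀, Complex.conj_ofReal]
    rw [h1, hn1, hn2, hi]
    have hre : RCLike.re (((b ^ 2 : ℝ) : ℂ)⁻¹ * (((a ^ 2 : ℝ) : ℂ)⁻¹ * (inner ℂ (z - y) (z - x) : ℂ)))
        = (b ^ 2)⁻¹ * ((a ^ 2)⁻¹ * RCLike.re ((inner ℂ (z - y) (z - x) : ℂ))) := by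
      simp only [RCLike.re_to_complex, ← Complex.ofReal_inv,
        Complex.re_ofReal_mul]
    rw [hre]
    set r := RCLike.re ((inner ℂ (z - y) (z - x) : ℂ)) with hr
    have ha2 : a ^ 2 ≠ 0 := by positivity
    have hb2 : b ^ 2 ≠ 0 := by positivity
    have hr2 : r = (b ^ 2 + a ^ 2 - c ^ 2) / 2 := by linarith
    rw [hr2]
    field_simp
    ring
  have hwnorm : ‖w‖ = c / (a * b) := by
    have h1 : (0:ℝ) ≤ ‖w‖ := norm_nonneg _
    have h2 : (0:ℝ) ≤ c / (a * b) := by positivity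
    nlinarith [hwnormsq]
  have hcoord : ‖w i‖ ≤ ‖w‖ := by
    rw [EuclideanSpace.norm_eq]
    have : ‖w i‖ = Real.sqrt (‖w i‖ ^ 2) := (Real.sqrt_sq (norm_nonneg _)).symm
    rw [this]
    apply Real.sqrt_le_sqrt
    exact Finset.single_le_sum (f := fun j => ‖w j‖ ^ 2)
      (fun j _ => by positivity) (Finset.mem_univ i)
  rw [hwi]
  refine le_trans (hcoord.trans_eq hwnorm) ?_
  have hc0 : (0:ℝ) ≤ c := norm_nonneg _
  have e : 2 * c / (a * b) * (1 + c / b) = c / (a * b) * (2 * (1 + c / b)) := by ring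
  rw [e]
  nth_rewrite 1 [← mul_one (c / (a * b))]
  apply mul_le_mul_of_nonneg_left ?_ (by positivity)
  have : (0:ℝ) ≤ c / b := by positivity
  linarith
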